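/- Let Σ be a positive semidefinite p × p real matrix, T₀ ⊆ {1,…,p} with |T₀| = S ≥ 1, and let ε ≥ 0 and c ≥ 0. Suppose h ∈ C_{T₀} satisfies hᵀΣh ≤ ε‖h‖₁² + c‖h‖₁, and suppose the compatibility factor satisfies κ(T₀; Σ)² > 4Sε. Then ‖h‖₁ ≤ 4Sc / (κ(T₀; Σ)² − 4Sε). -/

import Mathlib

open Matrix Finset

noncomputable def l1 {p : ℕ} (h : Fin p → ℝ) : ℝ := ∑ j, |h j|
noncomputable def l2 {p : ℕ} (h : Fin p → ℝ) : ℝ := Real.sqrt (∑ j, (h j) ^ 2)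
noncomputable def lqNorm {p : ℕ} (q : ℝ) (h : Fin p → ℝ) : ℝ := (∑ j, |h j| ^ q) ^ (1 / q)
noncomputable def linf {p : ℕ} (h : Fin p → ℝ) : ℝ := ⨆ j, |h j|
def restr {p : ℕ} (T : Finset (Fin p)) (h : Fin p → ℝ) : Fin p → ℝ :=
  fun j => if j ∈ T then h j else 0
def coneC {p : ℕ} (T : Finset (Fin p)) (h : Fin p → ℝ) : Prop :=
  l1 (restr Tᶜ h) ≤ l1 (restr T h)
noncomputable def quad {p : ℕ} (M : Matrix (Fin p) (Fin p) ℝ) (h : Fin p → ℝ) : ℝ :=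
  h ⬝ᵥ M.mulVec h

/-- Compatibility factor `κ(T₀; M) = inf_{0 ≠ h ∈ C_{T₀}} √|T₀| (hᵀMh)^{1/2} / ‖h_{T₀}‖₁`. -/
noncomputable def kappa {p : ℕ} (T0 : Finset (Fin p)) (M : Matrix (Fin p) (Fin p) ℝ) : ℝ :=
  sInf {x | ∃ h : Fin p → ℝ, h ≠ 0 ∧ coneC T0 h ∧
    x = Real.sqrt (T0.card) * Real.sqrt (quad M h) / l1 (restr T0 h)}

/-- Restricted eigenvalue `RE(T₀; M) = inf_{0 ≠ h ∈ C_{T₀}} (hᵀMh)^{1/2} / ‖h‖₂`. -/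
noncomputable def RE {p : ℕ} (T0 : Finset (Fin p)) (M : Matrix (Fin p) (Fin p) ℝ) : ℝ :=
  sInf {x | ∃ h : Fin p → ℝ, h ≠ 0 ∧ coneC T0 h ∧ x = Real.sqrt (quad M h) / l2 h}

/-- Weak cone invertibility factor
`F_q(T₀; M) = inf_{0 ≠ h ∈ C_{T₀}} |T₀|^{1/q} (hᵀMh) / (‖h_{T₀}‖₁ ‖h‖_q)`. -/
noncomputable def Fq {p : ℕ} (q : ℝ) (T0 : Finset (Fin p)) (M : Matrix (Fin p) (Fin p) ℝ) : ℝ :=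
  sInf {x | ∃ h : Fin p → ℝ, h ≠ 0 ∧ coneC T0 h ∧
    x = (T0.card : ℝ) ^ (1 / q) * quad M h / (l1 (restr T0 h) * lqNorm q h)}


lemma l1_nonneg {p : ℕ} (h : Fin p → ℝ) : 0 ≤ l1 h :=
  Finset.sum_nonneg fun j _ => abs_nonneg _

lemma l1_split {p : ℕ} (T : Finset (Fin p)) (h : Fin p → ℝ) :
    l1 h = l1 (restr T h) + l1 (restr Tᶜ h) := by
  unfold l1 restr
  rw [← Finset.sum_add_distrib]
  refine Finset.sum_congr rfl fun j _ => ?_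
  by_cases hj : j ∈ T <;> simp [hj]

/-- deterministic core of Theorem 4.5(i): `l₁` bound. -/
theorem stmt12 {p : ℕ} (M : Matrix (Fin p) (Fin p) ℝ) (hM : M.PosSemidef)
    (T0 : Finset (Fin p)) (S : ℕ) (hS : T0.card = S) (hS1 : 1 ≤ S)
    (ε c : ℝ) (hε : 0 ≤ ε) (hc : 0 ≤ c)
    (h : Fin p → ℝ) (hcone : coneC T0 h)
    (hquad : quad M h ≤ ε * l1 h ^ 2 + c * l1 h)
    (hkappa : 4 * S * ε < kappa T0 M ^ 2) :
    l1 h ≤ 4 * S * c / (kappa T0 M ^ 2 - 4 * S * ε) := by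
  set K := kappa T0 M with hK
  set N := l1 h with hN
  have hQ : 0 ≤ quad M h := by
    have := hM.dotProduct_mulVec_nonneg h
    simpa [quad, dotProduct, mul_comm] using this
  have hden : 0 < K ^ 2 - 4 * S * ε := by linarith
  by_cases hN0 : N = 0
  · rw [hN0]
    exact div_nonneg (by positivity) hden.le
  · have hNpos : 0 < N := lt_of_le_of_ne (l1_nonneg h) (Ne.symm hN0)
    have hsplit := l1_split T0 h
    have hL2 : N ≤ 2 * l1 (restr T0 h) := by
      have := hcone
      unfold coneC at this
      linarith
    have hLpos : 0 < l1 (restr T0 h) := by linarith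
    have hhne : h ≠ 0 := by
      intro h0
      apply hN0
      simp [hN, l1, h0]
    -- kappa ≥ 0 and kappa ≤ witness
    have hmem : Real.sqrt (T0.card) * Real.sqrt (quad M h) / l1 (restr T0 h) ∈
        {x | ∃ g : Fin p → ℝ, g ≠ 0 ∧ coneC T0 g ∧
          x = Real.sqrt (T0.card) * Real.sqrt (quad M g) / l1 (restr T0 g)} :=
      ⟨h, hhne, hcone, rfl⟩
    have hbdd : ∀ x ∈ {x | ∃ g : Fin p → ℝ, g ≠ 0 ∧ coneC T0 g ∧
          x = Real.sqrt (T0.card) * Real.sqrt (quad M g) / l1 (restr T0 g)}, (0:ℝ) ≤ x := by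
      rintro x ⟨g, -, -, rfl⟩
      exact div_nonneg (mul_nonneg (Real.sqrt_nonneg _) (Real.sqrt_nonneg _)) (l1_nonneg _)
    have hKnonneg : 0 ≤ K := le_csInf ⟨_, hmem⟩ hbdd
    have hKle : K ≤ Real.sqrt (T0.card) * Real.sqrt (quad M h) / l1 (restr T0 h) :=
      csInf_le ⟨0, fun x hx => hbdd x hx⟩ hmem
    have hKL : K * l1 (restr T0 h) ≤ Real.sqrt (T0.card) * Real.sqrt (quad M h) := by
      rw [div_eq_mul_inv] at hKle
      calc K * l1 (restr T0 h) ≤ (Real.sqrt (T0.card) * Real.sqrt (quad M h) * (l1 (restr T0 h))⁻¹) * l1 (restr T0 h) :=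
            mul_le_mul_of_nonneg_right hKle hLpos.le
        _ = Real.sqrt (T0.card) * Real.sqrt (quad M h) := by
            field_simp
    have hsq : (K * l1 (restr T0 h)) ^ 2 ≤ (S : ℝ) * quad M h := by
      have h1 : (K * l1 (restr T0 h)) ^ 2 ≤ (Real.sqrt (T0.card) * Real.sqrt (quad M h)) ^ 2 := by
        apply sq_le_sq' _ hKL
        have : 0 ≤ K * l1 (restr T0 h) := mul_nonneg hKnonneg hLpos.le
        nlinarith [mul_nonneg (Real.sqrt_nonneg (T0.card : ℝ)) (Real.sqrt_nonneg (quad M h))]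
      calc (K * l1 (restr T0 h)) ^ 2 ≤ (Real.sqrt (T0.card) * Real.sqrt (quad M h)) ^ 2 := h1
        _ = (T0.card : ℝ) * quad M h := by
            rw [mul_pow, Real.sq_sqrt (by positivity), Real.sq_sqrt hQ]
        _ = (S : ℝ) * quad M h := by rw [hS]
    -- K² N² ≤ 4 S Q
    have hKN : K ^ 2 * N ^ 2 ≤ 4 * S * quad M h := by
      have h3 : N ^ 2 ≤ (2 * l1 (restr T0 h)) ^ 2 := by nlinarith
      have h4 := mul_le_mul_of_nonneg_left h3 (sq_nonneg K)
      nlinarith [hsq]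
    have hfinal : (K ^ 2 - 4 * S * ε) * N ≤ 4 * S * c := by
      have h2 : K ^ 2 * N ^ 2 ≤ 4 * S * (ε * N ^ 2 + c * N) := by
        have hSnn : (0:ℝ) ≤ 4 * S := by positivity
        nlinarith
      nlinarith
    rw [le_div_iff₀ hden]
    linarith [hfinal, mul_comm N (K ^ 2 - 4 * (S:ℝ) * ε)]
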